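/- Let e ∈ ℕ be a code of the total computable function with constant value ⟨⟩ (the code of the empty list). For every (A₀, A₁) ∈ Σ: A₀ is inhabited if and only if (¬¬(A₀, A₁))₀ is inhabited; moreover, if A₀ is inhabited then ⟨e⟩ ∈ (¬¬(A₀, A₁))₀. -/

import Mathlib

open CategoryTheory Encodable Denumerable

namespace Herbrand

/-- Kleene application in Kleene's first pca `K₁`: `e · n`. -/
def kap (e n : ℕ) : Part ℕ := Nat.Partrec.Code.eval (ofNat Nat.Partrec.Code e) n

/-- `kapIn r n S` : `r · n` is defined and its value lies in `S`. -/
def kapIn (r n : ℕ) (S : Set ℕ) : Prop := ∃ v ∈ kap r n, v ∈ S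

/-- The list coded by a natural number (canonical bijection `ℕ ≃ List ℕ`). -/
def toL (n : ℕ) : List ℕ := ofNat (List ℕ) n

/-- The code of a list of natural numbers. -/
def ofL (l : List ℕ) : ℕ := encode l

@[simp] lemma toL_ofL (l : List ℕ) : toL (ofL l) = l := ofNat_encode l

/-- `!A` : the set of codes of lists all of whose entries lie in `A`. -/
def bang (A : Set ℕ) : Set ℕ := {n | ∀ x ∈ toL n, x ∈ A}

/-- `m ⪯ n` : every entry of the list coded by `m` is an entry of the list coded by `n`. -/
def sle (m n : ℕ) : Prop := ∀ x ∈ toL m, x ∈ toL n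

lemma sle_refl (m : ℕ) : sle m m := fun _ hx => hx

lemma sle_trans {m n k : ℕ} (h1 : sle m n) (h2 : sle n k) : sle m k :=
  fun x hx => h2 x (h1 x hx)

/-- `S` is upward closed in `!A`. -/
def UpwardClosedIn (A S : Set ℕ) : Prop :=
  ∀ m ∈ S, ∀ n ∈ bang A, sle m n → n ∈ S

/-- `↑_{!A} S` : the set of `n ∈ !A` with `m ⪯ n` for some `m ∈ S`. -/
def upClo (A S : Set ℕ) : Set ℕ := {n | n ∈ bang A ∧ ∃ m ∈ S, sle m n}

lemma mem_bang_univ (n : ℕ) : n ∈ bang Set.univ := fun x _ => Set.mem_univ x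

/-- From a partial recursive function we get a `K₁`-code for it. -/
theorem exists_kap_eq {f : ℕ →. ℕ} (hf : Nat.Partrec f) : ∃ e, ∀ n, kap e n = f n := by
  obtain ⟨c, hc⟩ := Nat.Partrec.Code.exists_code.mp hf
  exact ⟨encode c, fun n => by simp [kap, hc]⟩


/-- A pair of sets of numbers: candidate Herbrand truth value `(X₀, X₁)`. -/
structure HPair where
  act : Set ℕ
  pot : Set ℕ

/-- `X` is a Herbrand truth value (an element of `Σ`): `X₀ ⊆ !X₁` and
`X₀` is upward closed in `!X₁`. -/
def HPair.IsSigma (X : HPair) : Prop :=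
  X.act ⊆ bang X.pot ∧ UpwardClosedIn X.pot X.act

/-- The preorder on `X → Σ` of the Herbrand tripos. -/
def hle {X : Type} (φ ψ : X → HPair) : Prop :=
  ∃ r : ℕ, ∀ x : X, ∀ n : ℕ,
    (n ∈ bang (φ x).pot → kapIn r n (bang (ψ x).pot)) ∧
    (n ∈ (φ x).act → kapIn r n (ψ x).act)

/-- `A & B = {Nat.pair 0 a : a ∈ A} ∪ {Nat.pair 1 b : b ∈ B}`. -/
def amp (A B : Set ℕ) : Set ℕ :=
  (fun a => Nat.pair 0 a) '' A ∪ (fun b => Nat.pair 1 b) '' B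

/-- `m_A`: the code of the list of all `a` with `Nat.pair 0 a` an entry of the list coded
by `m`. -/
def projL (m : ℕ) : ℕ :=
  ofL ((toL m).filterMap fun p => if p.unpair.1 = 0 then some p.unpair.2 else none)

/-- `m_B`: the code of the list of all `b` with `Nat.pair 1 b` an entry of the list coded
by `m`. -/
def projR (m : ℕ) : ℕ :=
  ofL ((toL m).filterMap fun p => if p.unpair.1 = 1 then some p.unpair.2 else none)

/-- Conjunction of Herbrand truth values. -/
def conj (A B : HPair) : HPair where
  act := {m | m ∈ bang (amp A.pot B.pot) ∧ projL m ∈ A.act ∧ projR m ∈ B.act}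
  pot := amp A.pot B.pot

/-- Disjunction of Herbrand truth values. -/
def disj (A B : HPair) : HPair where
  act := {m | m ∈ bang (amp A.pot B.pot) ∧ (projL m ∈ A.act ∨ projR m ∈ B.act)}
  pot := amp A.pot B.pot

/-- The potential realizers of an implication. -/
def implPot (A B : HPair) : Set ℕ := {c | ∀ m ∈ bang A.pot, kapIn c m (bang B.pot)}

/-- Implication of Herbrand truth values. -/
def impl (A B : HPair) : HPair where
  act := upClo (implPot A B)
    {n | ∃ c, n = ofL [c] ∧ c ∈ implPot A B ∧ ∀ m ∈ A.act, kapIn c m B.act}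
  pot := implPot A B

/-- The bottom Herbrand truth value `(∅, ∅)`. -/
def bot : HPair := ⟨∅, ∅⟩

/-- Negation of Herbrand truth values: `¬A = A → (∅, ∅)`. -/
def neg (A : HPair) : HPair := impl A bot


/-- for `e` a code of the constant function with value `⟨⟩`, and any
`(A₀, A₁) ∈ Σ`: `A₀` is inhabited iff `(¬¬(A₀,A₁))₀` is inhabited, and if `A₀` is
inhabited then `⟨e⟩ ∈ (¬¬(A₀,A₁))₀`. -/
theorem doubleneg_act_nonempty (e : ℕ)
    (he : ∀ n : ℕ, kap e n = Part.some (ofL []))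
    (A : HPair) (hA : A.IsSigma) :
    (A.act.Nonempty ↔ (neg (neg A)).act.Nonempty) ∧
    (A.act.Nonempty → ofL [e] ∈ (neg (neg A)).act) := by
  -- e is a potential realizer of any negation
  have heImpl : ∀ B : HPair, e ∈ implPot B bot := by
    intro B m _
    refine ⟨ofL [], by rw [he]; exact Part.mem_some _, ?_⟩
    intro x hx
    rw [toL_ofL] at hx
    exact absurd hx (List.not_mem_nil)
  -- if A.act is empty then (neg A).act is nonempty
  have hneg_of_empty : A.act = ∅ → (neg A).act.Nonempty := by
    intro h
    refine ⟨ofL [e], ?_, ofL [e], ⟨e, rfl, heImpl A, ?_⟩, sle_refl _⟩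
    · intro x hx
      rw [toL_ofL, List.mem_singleton] at hx
      subst hx
      exact heImpl A
    · intro m hm
      rw [h] at hm
      exact hm.elim
  -- if A.act is nonempty then (neg A).act is empty
  have hempty_of_act : A.act.Nonempty → (neg A).act = ∅ := by
    rintro ⟨a, ha⟩
    ext n
    simp only [Set.mem_empty_iff_false, iff_false]
    rintro ⟨_, m, ⟨c, rfl, _, hall⟩, _⟩
    obtain ⟨v, _, hv⟩ := hall a ha
    exact hv
  -- the main membership fact
  have hmem : A.act.Nonempty → ofL [e] ∈ (neg (neg A)).act := by
    intro hA0
    refine ⟨?_, ofL [e], ⟨e, rfl, heImpl (neg A), ?_⟩, sle_refl _⟩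
    · intro x hx
      rw [toL_ofL, List.mem_singleton] at hx
      subst hx
      exact heImpl (neg A)
    · intro m hm
      rw [hempty_of_act hA0] at hm
      exact hm.elim
  refine ⟨⟨fun h => ⟨ofL [e], hmem h⟩, ?_⟩, hmem⟩
  rintro ⟨n, _, m, ⟨c, rfl, _, hall⟩, _⟩
  by_contra hA0
  obtain ⟨m', hm'⟩ := hneg_of_empty (Set.not_nonempty_iff_eq_empty.mp hA0)
  obtain ⟨v, _, hv⟩ := hall m' hm'
  exact hv

end Herbrand
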